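/- Fix an integer n ≥ 1 and k ∈ {0, 1, …, 2n}. Let P and Q be real polynomials of degree exactly 2n that are strictly positive at every point of ℝ, let u, v ∈ V_{2n−1}, and let θ : ℝ → ℝ be Lebesgue-measurable with θ(x) > 0 for all x and ∫ (1+|x|^{2n}) θ(x)(1 + |log θ(x)| + log(1+|x|)) dx < ∞. Then there exists δ > 0 such that for all ε with |ε| < δ the polynomials P + εu and Q + εv are strictly positive on ℝ and the function x ↦ x^k θ(x) log((P(x)+εu(x))θ(x)/(Q(x)+εv(x))) is Lebesgue integrable; moreover, the map ε ↦ ∫_ℝ x^k θ(x) log((P(x)+εu(x))θ(x)/(Q(x)+εv(x))) dx is differentiable at ε = 0 with derivative ∫_ℝ x^k ( u(x)/P(x) − v(x)/Q(x) ) θ(x) dx. -/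

import Mathlib

open MeasureTheory Polynomial Real

section AuxLemmas

lemma aux_upper (p : Polynomial ℝ) (d : ℕ) (hd : p.natDegree ≤ d) :
    ∃ C : ℝ, 0 ≤ C ∧ ∀ x : ℝ, |p.eval x| ≤ C * (1 + |x|) ^ d := by
  refine ⟨∑ i ∈ Finset.range (d+1), |p.coeff i|,
    Finset.sum_nonneg (fun _ _ => abs_nonneg _), fun x => ?_⟩
  rw [Polynomial.eval_eq_sum_range' (Nat.lt_succ_of_le hd)]
  calc |∑ i ∈ Finset.range (d+1), p.coeff i * x ^ i|
      ≤ ∑ i ∈ Finset.range (d+1), |p.coeff i * x ^ i| := Finset.abs_sum_le_sum_abs _ _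
    _ ≤ ∑ i ∈ Finset.range (d+1), |p.coeff i| * (1+|x|)^d := by
        apply Finset.sum_le_sum; intro i hi
        rw [abs_mul, abs_pow]
        refine mul_le_mul_of_nonneg_left ?_ (abs_nonneg _)
        calc |x|^i ≤ (1+|x|)^i := pow_le_pow_left₀ (abs_nonneg x) (by linarith [abs_nonneg x]) i
          _ ≤ (1+|x|)^d := pow_le_pow_right₀ (by linarith [abs_nonneg x]) (Finset.mem_range_succ_iff.mp hi)
    _ = _ := by rw [← Finset.sum_mul]

lemma aux_lower (n : ℕ) (hn : 1 ≤ n) (P : Polynomial ℝ) (hPdeg : P.natDegree = 2*n)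
    (hPpos : ∀ x : ℝ, 0 < P.eval x) :
    ∃ c : ℝ, 0 < c ∧ ∀ x : ℝ, c * (1+|x|)^(2*n) ≤ P.eval x := by
  have hP0 : P ≠ 0 := fun h => by simpa [h] using hPpos 0
  set a := P.leadingCoeff with ha
  have hane : a ≠ 0 := Polynomial.leadingCoeff_ne_zero.mpr hP0
  have habs : 0 < |a| := abs_pos.mpr hane
  have hqdeg : P.eraseLead.natDegree ≤ 2*n - 1 := by
    have := Polynomial.eraseLead_natDegree_le P
    omega
  obtain ⟨Cq, hCq0, hCq⟩ := aux_upper P.eraseLead (2*n-1) hqdeg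
  -- split of P
  have hsplit : ∀ x : ℝ, P.eval x = P.eraseLead.eval x + a * x^(2*n) := by
    intro x
    conv_lhs => rw [← Polynomial.eraseLead_add_C_mul_X_pow P]
    simp [hPdeg, ha]
  set K := Cq * 2^(2*n-1) with hK
  have hK0 : 0 ≤ K := by positivity
  set R := max 1 (2*K/|a|) with hR
  have hR1 : (1:ℝ) ≤ R := le_max_left _ _
  -- key estimate for |x| ≥ R
  have hkey : ∀ x : ℝ, R ≤ |x| → |P.eraseLead.eval x| ≤ (|a|/2) * |x|^(2*n) := by
    intro x hx
    have hx1 : (1:ℝ) ≤ |x| := le_trans hR1 hx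
    have h1 : |P.eraseLead.eval x| ≤ K * |x|^(2*n-1) := by
      refine (hCq x).trans ?_
      rw [hK, mul_assoc]
      gcongr
      calc (1+|x|)^(2*n-1) ≤ (2*|x|)^(2*n-1) := by gcongr; linarith
        _ = 2^(2*n-1) * |x|^(2*n-1) := mul_pow _ _ _
    refine h1.trans ?_
    have hxK : 2*K/|a| ≤ |x| := le_trans (le_max_right _ _) hx
    have h2 : 2*K ≤ |a| * |x| := by
      rw [div_le_iff₀ habs] at hxK; linarith
    have h3 : |x|^(2*n) = |x| * |x|^(2*n-1) := by
      rw [← pow_succ']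
      congr 1
      omega
    rw [h3]
    nlinarith [pow_nonneg (abs_nonneg x) (2*n-1), pow_nonneg (abs_nonneg x) (2*n), abs_nonneg x]
  have hRpow : (1:ℝ) ≤ R^(2*n) := one_le_pow₀ hR1
  -- leading coefficient is positive
  have hapos : 0 < a := by
    rcases lt_or_gt_of_ne hane with hneg | hpos
    · exfalso
      have hPR := hPpos R
      have h4 := hkey R (by rw [abs_of_pos (by linarith : (0:ℝ) < R)])
      rw [abs_of_pos (by linarith : (0:ℝ) < R)] at h4
      have : P.eval R ≤ (|a|/2) * R^(2*n) + a * R^(2*n) := by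
        rw [hsplit R]; nlinarith [le_abs_self (P.eraseLead.eval R)]
      rw [abs_of_neg hneg] at this
      nlinarith
    · exact hpos
  -- bound for |x| ≥ R
  have hfar : ∀ x : ℝ, R ≤ |x| → (a/2^(2*n+1)) * (1+|x|)^(2*n) ≤ P.eval x := by
    intro x hx
    have hx1 : (1:ℝ) ≤ |x| := le_trans hR1 hx
    have h4 := hkey x hx
    rw [abs_of_pos hapos] at h4
    have h5 : (1+|x|)^(2*n) ≤ 2^(2*n) * |x|^(2*n) := by
      calc (1+|x|)^(2*n) ≤ (2*|x|)^(2*n) := by gcongr; linarith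
        _ = _ := mul_pow _ _ _
    have hxe : x^(2*n) = |x|^(2*n) := by
      rw [pow_mul, pow_mul, sq_abs]
    have h6 : (a/2) * |x|^(2*n) ≤ P.eval x := by
      rw [hsplit x, hxe]
      nlinarith [neg_abs_le (P.eraseLead.eval x)]
    have h7 : (a/2^(2*n+1)) * (1+|x|)^(2*n) ≤ (a/2) * |x|^(2*n) := by
      rw [div_mul_eq_mul_div, div_mul_eq_mul_div, div_le_div_iff₀ (by positivity) (by norm_num)]
      have h2e : (2:ℝ)^(2*n+1) = 2^(2*n) * 2 := pow_succ 2 (2*n)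
      have h10 := mul_le_mul_of_nonneg_left h5 hapos.le
      rw [h2e]; nlinarith [h10]
    linarith
  -- min on compact part
  obtain ⟨x₀, hx₀mem, hx₀min⟩ := (isCompact_Icc (a := -R) (b := R)).exists_isMinOn
    (Set.nonempty_Icc.mpr (by linarith)) (Polynomial.continuous P).continuousOn
  set m := P.eval x₀ with hm
  have hm0 : 0 < m := hPpos x₀
  have hnear : ∀ x : ℝ, |x| ≤ R → (m/(1+R)^(2*n)) * (1+|x|)^(2*n) ≤ P.eval x := by
    intro x hx
    have h8 : m ≤ P.eval x := hx₀min (Set.mem_Icc.mpr (abs_le.mp hx))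
    have h9 : (1+|x|)^(2*n) ≤ (1+R)^(2*n) :=
      pow_le_pow_left₀ (by positivity) (by linarith) _
    rw [div_mul_eq_mul_div, div_le_iff₀ (by positivity)]
    exact mul_le_mul h8 h9 (by positivity) (hPpos x).le
  refine ⟨min (a/2^(2*n+1)) (m/(1+R)^(2*n)), lt_min (by positivity) (by positivity), fun x => ?_⟩
  rcases le_total R |x| with h | h
  · exact le_trans (mul_le_mul_of_nonneg_right (min_le_left _ _) (by positivity)) (hfar x h)
  · exact le_trans (mul_le_mul_of_nonneg_right (min_le_right _ _) (by positivity)) (hnear x h)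

lemma aux_deriv (c p q t a b ε : ℝ) (hp : 0 < p + ε*a) (hq : 0 < q + ε*b) (ht : 0 < t) :
    HasDerivAt (fun e : ℝ => c * Real.log ((p + e*a) * t / (q + e*b)))
      (c * (a/(p+ε*a) - b/(q+ε*b))) ε := by
  have h0 : HasDerivAt (fun e : ℝ => p + e*a) a ε := by
    simpa using (hasDerivAt_mul_const a).const_add p
  have h2 : HasDerivAt (fun e : ℝ => q + e*b) b ε := by
    simpa using (hasDerivAt_mul_const b).const_add q
  have h1 : HasDerivAt (fun e : ℝ => (p + e*a) * t) (a*t) ε := h0.mul_const t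
  have hdiv := h1.div h2 hq.ne'
  have hval : 0 < (p + ε*a) * t / (q + ε*b) := by positivity
  have hlog := (hdiv.log hval.ne').const_mul c
  refine hlog.congr_deriv ?_
  simp only [Pi.div_apply]
  generalize p + ε*a = P' at hp ⊢
  generalize q + ε*b = Q' at hq ⊢
  field_simp [hp.ne', hq.ne', ht.ne']

lemma aux_logbound {t lo hi : ℝ} (hlo : 0 < lo) (h1 : lo ≤ t) (h2 : t ≤ hi) :
    |Real.log t| ≤ |Real.log lo| + |Real.log hi| := by
  have ht : 0 < t := lt_of_lt_of_le hlo h1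
  have e1 : Real.log lo ≤ Real.log t := Real.log_le_log hlo h1
  have e2 : Real.log t ≤ Real.log hi := Real.log_le_log ht h2
  rw [abs_le]
  constructor
  · have := neg_abs_le (Real.log lo)
    have := abs_nonneg (Real.log hi)
    linarith
  · have := le_abs_self (Real.log hi)
    have := abs_nonneg (Real.log lo)
    linarith

end AuxLemmas

set_option maxHeartbeats 2000000 in
/-- Directional derivative of the generalized logarithmic moment functional
`g_k(P,Q) = ∫ x^k θ(x) log(P(x)θ(x)/Q(x)) dx` in the direction `(u,v) ∈ V_{2n−1} × V_{2n−1}`: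
it equals `∫ x^k (u/P − v/Q) θ dx`; moreover for small `ε` the perturbed polynomials remain
positive and the integrand remains integrable. -/
theorem logMoment_directional_derivative
    (n k : ℕ) (hn : 1 ≤ n) (hk : k ≤ 2 * n)
    (P Q : Polynomial ℝ)
    (hPdeg : P.natDegree = 2 * n) (hQdeg : Q.natDegree = 2 * n)
    (hPpos : ∀ x : ℝ, 0 < P.eval x) (hQpos : ∀ x : ℝ, 0 < Q.eval x)
    (u v : Polynomial ℝ)
    (hu : u ∈ Polynomial.degreeLT ℝ (2 * n)) (hv : v ∈ Polynomial.degreeLT ℝ (2 * n))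
    (θ : ℝ → ℝ) (hθmeas : Measurable θ) (hθpos : ∀ x, 0 < θ x)
    (hθint : Integrable (fun x : ℝ =>
      (1 + |x| ^ (2 * n)) * θ x * (1 + |Real.log (θ x)| + Real.log (1 + |x|)))) :
    ∃ δ > (0 : ℝ),
      (∀ ε : ℝ, |ε| < δ →
        (∀ x : ℝ, 0 < (P + ε • u).eval x) ∧ (∀ x : ℝ, 0 < (Q + ε • v).eval x) ∧
        Integrable (fun x : ℝ => x ^ k * θ x *
          Real.log ((P + ε • u).eval x * θ x / (Q + ε • v).eval x))) ∧
      HasDerivAt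
        (fun ε : ℝ => ∫ x : ℝ, x ^ k * θ x *
          Real.log ((P + ε • u).eval x * θ x / (Q + ε • v).eval x))
        (∫ x : ℝ, x ^ k * (u.eval x / P.eval x - v.eval x / Q.eval x) * θ x) 0 := by
  -- degree facts for u, v
  have hund : u.natDegree ≤ 2*n - 1 := by
    rcases eq_or_ne u 0 with h | h
    · simp [h]
    · have := (Polynomial.natDegree_lt_iff_degree_lt h).mpr (Polynomial.mem_degreeLT.mp hu)
      omega
  have hvnd : v.natDegree ≤ 2*n - 1 := by
    rcases eq_or_ne v 0 with h | h
    · simp [h]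
    · have := (Polynomial.natDegree_lt_iff_degree_lt h).mpr (Polynomial.mem_degreeLT.mp hv)
      omega
  -- bounds
  obtain ⟨cP, hcP0, hcP⟩ := aux_lower n hn P hPdeg hPpos
  obtain ⟨cQ, hcQ0, hcQ⟩ := aux_lower n hn Q hQdeg hQpos
  obtain ⟨CP, hCP0, hCP⟩ := aux_upper P (2*n) hPdeg.le
  obtain ⟨CQ, hCQ0, hCQ⟩ := aux_upper Q (2*n) hQdeg.le
  obtain ⟨Cu, hCu0, hCu⟩ := aux_upper u (2*n-1) hund
  obtain ⟨Cv, hCv0, hCv⟩ := aux_upper v (2*n-1) hvnd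
  -- ratio bounds : |u| ≤ Mu * P
  set Mu := Cu / cP with hMu
  set Mv := Cv / cQ with hMv
  have hMu0 : 0 ≤ Mu := div_nonneg hCu0 hcP0.le
  have hMv0 : 0 ≤ Mv := div_nonneg hCv0 hcQ0.le
  have hone : ∀ x : ℝ, (1:ℝ) ≤ (1+|x|)^(2*n) :=
    fun x => one_le_pow₀ (by linarith [abs_nonneg x])
  have huP : ∀ x : ℝ, |u.eval x| ≤ Mu * P.eval x := by
    intro x
    have h1 : |u.eval x| ≤ Cu * (1+|x|)^(2*n) := by
      refine (hCu x).trans ?_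
      gcongr
      · linarith [abs_nonneg x]
      · omega
    have h2 := hcP x
    calc |u.eval x| ≤ Cu * (1+|x|)^(2*n) := h1
      _ = Mu * (cP * (1+|x|)^(2*n)) := by rw [hMu]; field_simp
      _ ≤ Mu * P.eval x := by gcongr
  have hvQ : ∀ x : ℝ, |v.eval x| ≤ Mv * Q.eval x := by
    intro x
    have h1 : |v.eval x| ≤ Cv * (1+|x|)^(2*n) := by
      refine (hCv x).trans ?_
      gcongr
      · linarith [abs_nonneg x]
      · omega
    have h2 := hcQ x
    calc |v.eval x| ≤ Cv * (1+|x|)^(2*n) := h1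
      _ = Mv * (cQ * (1+|x|)^(2*n)) := by rw [hMv]; field_simp
      _ ≤ Mv * Q.eval x := by gcongr
  -- choice of δ
  set δ := (2*Mu + 2*Mv + 1)⁻¹ with hδ
  have hδ0 : 0 < δ := by positivity
  have hδMu : δ * Mu ≤ 1/2 := by
    rw [hδ, inv_mul_eq_div, div_le_div_iff₀ (by positivity) (by norm_num)]
    linarith
  have hδMv : δ * Mv ≤ 1/2 := by
    rw [hδ, inv_mul_eq_div, div_le_div_iff₀ (by positivity) (by norm_num)]
    linarith
  -- eval of perturbed polynomials
  have hev : ∀ (ε x : ℝ) (p w : Polynomial ℝ), ((p + ε • w).eval x) = p.eval x + ε * w.eval x := by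
    intro ε x p w; simp
  -- sandwich for P + εu
  have hsandP : ∀ ε : ℝ, |ε| < δ → ∀ x : ℝ,
      P.eval x / 2 ≤ (P + ε • u).eval x ∧ (P + ε • u).eval x ≤ 3/2 * P.eval x := by
    intro ε hε x
    have h1 : |ε * u.eval x| ≤ P.eval x / 2 := by
      rw [abs_mul]
      calc |ε| * |u.eval x| ≤ δ * (Mu * P.eval x) :=
            mul_le_mul hε.le (huP x) (abs_nonneg _) hδ0.le
        _ = (δ * Mu) * P.eval x := by ring
        _ ≤ (1/2) * P.eval x := mul_le_mul_of_nonneg_right hδMu (hPpos x).le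
        _ = P.eval x / 2 := by ring
    rw [hev]
    have := abs_le.mp h1
    constructor <;> linarith
  have hsandQ : ∀ ε : ℝ, |ε| < δ → ∀ x : ℝ,
      Q.eval x / 2 ≤ (Q + ε • v).eval x ∧ (Q + ε • v).eval x ≤ 3/2 * Q.eval x := by
    intro ε hε x
    have h1 : |ε * v.eval x| ≤ Q.eval x / 2 := by
      rw [abs_mul]
      calc |ε| * |v.eval x| ≤ δ * (Mv * Q.eval x) :=
            mul_le_mul hε.le (hvQ x) (abs_nonneg _) hδ0.le
        _ = (δ * Mv) * Q.eval x := by ring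
        _ ≤ (1/2) * Q.eval x := mul_le_mul_of_nonneg_right hδMv (hQpos x).le
        _ = Q.eval x / 2 := by ring
    rw [hev]
    have := abs_le.mp h1
    constructor <;> linarith
  have hposP : ∀ ε : ℝ, |ε| < δ → ∀ x : ℝ, 0 < (P + ε • u).eval x :=
    fun ε hε x => lt_of_lt_of_le (by linarith [hPpos x]) (hsandP ε hε x).1
  have hposQ : ∀ ε : ℝ, |ε| < δ → ∀ x : ℝ, 0 < (Q + ε • v).eval x :=
    fun ε hε x => lt_of_lt_of_le (by linarith [hQpos x]) (hsandQ ε hε x).1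
  -- |x|^k bound
  have hxk : ∀ x : ℝ, |x|^k ≤ 1 + |x|^(2*n) := by
    intro x
    rcases le_total |x| 1 with h | h
    · have h1 : |x|^k ≤ 1 := pow_le_one₀ (abs_nonneg x) h
      have h2 : (0:ℝ) ≤ |x|^(2*n) := pow_nonneg (abs_nonneg x) _
      linarith
    · have h1 : |x|^k ≤ |x|^(2*n) := pow_le_pow_right₀ h hk
      linarith
  -- the dominating integrand
  set G := fun x : ℝ => (1 + |x| ^ (2 * n)) * θ x * (1 + |Real.log (θ x)| + Real.log (1 + |x|))
    with hG
  have hL0 : ∀ x : ℝ, 0 ≤ Real.log (1+|x|) := fun x => Real.log_nonneg (by linarith [abs_nonneg x])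
  have hGfac : ∀ x : ℝ, (1:ℝ) ≤ 1 + |Real.log (θ x)| + Real.log (1+|x|) := by
    intro x; have := abs_nonneg (Real.log (θ x)); have := hL0 x; linarith
  have hG0 : ∀ x : ℝ, 0 ≤ G x := by
    intro x
    have h1 : (0:ℝ) ≤ 1 + |x|^(2*n) := by positivity
    have := (hθpos x).le
    have := hGfac x
    rw [hG]
    positivity
  -- log bounds : constants
  set AP := |Real.log (cP/2)| + |Real.log ((3/2)*(CP+1))| with hAP
  set AQ := |Real.log (cQ/2)| + |Real.log ((3/2)*(CQ+1))| with hAQ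
  have hAP0 : 0 ≤ AP := by positivity
  have hAQ0 : 0 ≤ AQ := by positivity
  have hlogP : ∀ ε : ℝ, |ε| < δ → ∀ x : ℝ,
      |Real.log ((P + ε • u).eval x)| ≤ AP + 2*n * Real.log (1+|x|) := by
    intro ε hε x
    have hlo : cP/2 ≤ (P + ε • u).eval x := by
      have := (hsandP ε hε x).1
      have h2 := hcP x
      have h3 := hone x
      nlinarith
    have hhi : (P + ε • u).eval x ≤ ((3/2)*(CP+1)) * (1+|x|)^(2*n) := by
      have := (hsandP ε hε x).2
      have h2 := (le_abs_self (P.eval x)).trans (hCP x)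
      have h3 := hone x
      nlinarith
    have := aux_logbound (by positivity) hlo hhi
    refine this.trans ?_
    rw [hAP]
    have h4 : |Real.log (((3/2)*(CP+1)) * (1+|x|)^(2*n))|
        ≤ |Real.log ((3/2)*(CP+1))| + 2*n * Real.log (1+|x|) := by
      rw [Real.log_mul (by positivity) (by positivity), Real.log_pow]
      refine (abs_add_le _ _).trans ?_
      rw [abs_of_nonneg (mul_nonneg (by positivity) (hL0 x) : (0:ℝ) ≤ ((2*n : ℕ) : ℝ) * Real.log (1+|x|))]
      push_cast
      linarith
    linarith
  have hlogQ : ∀ ε : ℝ, |ε| < δ → ∀ x : ℝ,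
      |Real.log ((Q + ε • v).eval x)| ≤ AQ + 2*n * Real.log (1+|x|) := by
    intro ε hε x
    have hlo : cQ/2 ≤ (Q + ε • v).eval x := by
      have := (hsandQ ε hε x).1
      have h2 := hcQ x
      have h3 := hone x
      nlinarith
    have hhi : (Q + ε • v).eval x ≤ ((3/2)*(CQ+1)) * (1+|x|)^(2*n) := by
      have := (hsandQ ε hε x).2
      have h2 := (le_abs_self (Q.eval x)).trans (hCQ x)
      have h3 := hone x
      nlinarith
    have := aux_logbound (by positivity) hlo hhi
    refine this.trans ?_
    rw [hAQ]
    have h4 : |Real.log (((3/2)*(CQ+1)) * (1+|x|)^(2*n))|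
        ≤ |Real.log ((3/2)*(CQ+1))| + 2*n * Real.log (1+|x|) := by
      rw [Real.log_mul (by positivity) (by positivity), Real.log_pow]
      refine (abs_add_le _ _).trans ?_
      rw [abs_of_nonneg (mul_nonneg (by positivity) (hL0 x) : (0:ℝ) ≤ ((2*n : ℕ) : ℝ) * Real.log (1+|x|))]
      push_cast
      linarith
    linarith
  -- measurability of the integrand
  have hmeasF : ∀ ε : ℝ, AEStronglyMeasurable (fun x : ℝ => x ^ k * θ x *
      Real.log ((P + ε • u).eval x * θ x / (Q + ε • v).eval x)) volume := by
    intro ε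
    apply Measurable.aestronglyMeasurable
    apply ((measurable_id.pow_const k).mul hθmeas).mul
    apply Measurable.log
    exact (((P + ε • u).continuous_aeval.measurable.mul hθmeas).div
      (Q + ε • v).continuous_aeval.measurable)
  -- integrability for |ε| < δ
  set B := AP + AQ + 1 + 4*n with hB
  have hInt : ∀ ε : ℝ, |ε| < δ → Integrable (fun x : ℝ => x ^ k * θ x *
      Real.log ((P + ε • u).eval x * θ x / (Q + ε • v).eval x)) := by
    intro ε hε
    refine (hθint.const_mul B).mono' (hmeasF ε) (Filter.Eventually.of_forall fun x => ?_)
    have hPe := hposP ε hε x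
    have hQe := hposQ ε hε x
    have hθx := hθpos x
    have hlog : Real.log ((P + ε • u).eval x * θ x / (Q + ε • v).eval x)
        = Real.log ((P + ε • u).eval x) + Real.log (θ x) - Real.log ((Q + ε • v).eval x) := by
      rw [Real.log_div (by positivity) hQe.ne', Real.log_mul hPe.ne' hθx.ne']
    rw [Real.norm_eq_abs, abs_mul, abs_mul, abs_pow, abs_of_pos hθx, hlog]
    have h1 : |Real.log ((P + ε • u).eval x) + Real.log (θ x) - Real.log ((Q + ε • v).eval x)|
        ≤ AP + AQ + |Real.log (θ x)| + 4*n*Real.log (1+|x|) := by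
      have h2 := abs_le.mp (hlogP ε hε x)
      have h3 := abs_le.mp (hlogQ ε hε x)
      have hT1 := le_abs_self (Real.log (θ x))
      have hT2 := neg_abs_le (Real.log (θ x))
      rw [abs_le]
      exact ⟨by linarith [h2.1, h3.2], by linarith [h2.2, h3.1]⟩
    calc |x|^k * θ x * |_ + _ - _| ≤ (1 + |x|^(2*n)) * θ x *
          (AP + AQ + |Real.log (θ x)| + 4*n*Real.log (1+|x|)) := by
          apply mul_le_mul
          · exact mul_le_mul_of_nonneg_right (hxk x) hθx.le
          · exact h1
          · exact abs_nonneg _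
          · positivity
      _ ≤ B * G x := by
          have h9 : G x = (1 + |x|^(2*n)) * θ x * (1 + |Real.log (θ x)| + Real.log (1+|x|)) := rfl
          rw [h9, hB]
          have h5 := hL0 x
          have h6 := abs_nonneg (Real.log (θ x))
          have h7 : (0:ℝ) ≤ (1 + |x|^(2*n)) * θ x := by positivity
          have h8 : AP + AQ + |Real.log (θ x)| + 4*n*Real.log (1+|x|)
              ≤ (AP + AQ + 1 + 4*n) * (1 + |Real.log (θ x)| + Real.log (1+|x|)) := by
            have hn0 : (0:ℝ) ≤ (n:ℝ) := Nat.cast_nonneg n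
            nlinarith
          calc (1 + |x|^(2*n)) * θ x * (AP + AQ + |Real.log (θ x)| + 4*n*Real.log (1+|x|))
              ≤ (1 + |x|^(2*n)) * θ x *
                ((AP + AQ + 1 + 4*n) * (1 + |Real.log (θ x)| + Real.log (1+|x|))) :=
                mul_le_mul_of_nonneg_left h8 h7
            _ = (AP + AQ + 1 + 4*n) * ((1 + |x|^(2*n)) * θ x *
                (1 + |Real.log (θ x)| + Real.log (1+|x|))) := by ring
  -- derivative integrand
  set F' : ℝ → ℝ → ℝ := fun ε x => x ^ k * θ x *
    (u.eval x / (P + ε • u).eval x - v.eval x / (Q + ε • v).eval x) with hF'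
  have hF'meas : AEStronglyMeasurable (F' 0) volume := by
    apply Measurable.aestronglyMeasurable
    apply ((measurable_id.pow_const k).mul hθmeas).mul
    exact (u.continuous_aeval.measurable.div (P + (0:ℝ) • u).continuous_aeval.measurable).sub
      (v.continuous_aeval.measurable.div (Q + (0:ℝ) • v).continuous_aeval.measurable)
  -- bound on F'
  have hF'bound : ∀ x : ℝ, ∀ ε ∈ Metric.ball (0:ℝ) δ, ‖F' ε x‖ ≤ (2*Mu + 2*Mv) * G x := by
    intro x ε hε
    rw [Metric.mem_ball, dist_zero_right, Real.norm_eq_abs] at hε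
    have hPe := hposP ε hε x
    have hQe := hposQ ε hε x
    have hθx := hθpos x
    have h1 : |u.eval x / (P + ε • u).eval x| ≤ 2*Mu := by
      rw [abs_div, abs_of_pos hPe, div_le_iff₀ hPe]
      have h2 := (hsandP ε hε x).1
      have h3 := huP x
      nlinarith [hPpos x]
    have h2 : |v.eval x / (Q + ε • v).eval x| ≤ 2*Mv := by
      rw [abs_div, abs_of_pos hQe, div_le_iff₀ hQe]
      have h3 := (hsandQ ε hε x).1
      have h4 := hvQ x
      nlinarith [hQpos x]
    rw [hF', Real.norm_eq_abs, abs_mul, abs_mul, abs_pow, abs_of_pos hθx]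
    have h5 : |u.eval x / (P + ε • u).eval x - v.eval x / (Q + ε • v).eval x| ≤ 2*Mu + 2*Mv := by
      refine (abs_sub _ _).trans ?_
      linarith
    calc |x|^k * θ x * |_ - _| ≤ (1 + |x|^(2*n)) * θ x * (2*Mu + 2*Mv) := by
          apply mul_le_mul
          · exact mul_le_mul_of_nonneg_right (hxk x) hθx.le
          · exact h5
          · exact abs_nonneg _
          · positivity
      _ ≤ (2*Mu + 2*Mv) * G x := by
          have h9 : G x = (1 + |x|^(2*n)) * θ x * (1 + |Real.log (θ x)| + Real.log (1+|x|)) := rfl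
          have h6 := hGfac x
          have h7 : (0:ℝ) ≤ (1 + |x|^(2*n)) * θ x * (2*Mu + 2*Mv) :=
            mul_nonneg (mul_nonneg (by positivity) (hθpos x).le) (by linarith)
          calc (1 + |x|^(2*n)) * θ x * (2*Mu + 2*Mv)
              ≤ (1 + |x|^(2*n)) * θ x * (2*Mu + 2*Mv) *
                (1 + |Real.log (θ x)| + Real.log (1+|x|)) := le_mul_of_one_le_right h7 h6
            _ = (2*Mu + 2*Mv) * G x := by rw [h9]; ring
  -- pointwise differentiability
  have hdiff : ∀ x : ℝ, ∀ ε ∈ Metric.ball (0:ℝ) δ,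
      HasDerivAt (fun e : ℝ => x ^ k * θ x *
        Real.log ((P + e • u).eval x * θ x / (Q + e • v).eval x)) (F' ε x) ε := by
    intro x ε hε
    rw [Metric.mem_ball, dist_zero_right, Real.norm_eq_abs] at hε
    have hPe := hposP ε hε x
    have hQe := hposQ ε hε x
    rw [hev] at hPe
    rw [hev] at hQe
    have := aux_deriv (x ^ k * θ x) (P.eval x) (Q.eval x) (θ x) (u.eval x) (v.eval x) ε
      hPe hQe (hθpos x)
    have heq : (fun e : ℝ => x ^ k * θ x *
        Real.log ((P + e • u).eval x * θ x / (Q + e • v).eval x))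
        = (fun e : ℝ => x ^ k * θ x *
        Real.log ((P.eval x + e * u.eval x) * θ x / (Q.eval x + e * v.eval x))) := by
      funext e; rw [hev, hev]
    rw [heq]
    convert this using 1
    simp only [hF', hev]
  -- apply the dominated parametric derivative theorem
  have key := hasDerivAt_integral_of_dominated_loc_of_deriv_le (μ := volume)
    (F := fun ε x => x ^ k * θ x *
      Real.log ((P + ε • u).eval x * θ x / (Q + ε • v).eval x))
    (F' := F') (x₀ := 0) (bound := fun x => (2*Mu + 2*Mv) * G x) (Metric.ball_mem_nhds 0 hδ0)
    (Filter.Eventually.of_forall hmeasF)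
    (hInt 0 (by simpa using hδ0))
    hF'meas
    (Filter.Eventually.of_forall fun x => hF'bound x)
    (hθint.const_mul (2*Mu + 2*Mv))
    (Filter.Eventually.of_forall fun x => hdiff x)
  refine ⟨δ, hδ0, fun ε hε => ⟨hposP ε hε, hposQ ε hε, hInt ε hε⟩, ?_⟩
  have hcong : (∫ x : ℝ, F' 0 x)
      = ∫ x : ℝ, x ^ k * (u.eval x / P.eval x - v.eval x / Q.eval x) * θ x := by
    refine integral_congr_ae (Filter.Eventually.of_forall fun x => ?_)
    rw [hF']
    simp only [zero_smul, add_zero]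
    ring
  rw [← hcong]
  exact key.2
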